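/- At the stationary point of the graph mean field model, larger-degree users stochastically dominate smaller-degree ones: if k > k' (both in K), then s_{k,i}* ≥ s_{k',i}* for all i ≥ 0. -/

import Mathlib

open Finset Filter

/-- `zfun K p kbar s k i` is the quantity `z_{k,i+1}(s)` of the graph mean field model:
`(1/2) * Σ_{k'∈K} ((k'+k)/k̄) p(k') (s_{k',i} + s_{k',i+1})`. -/
noncomputable def zfun (K : Finset ℕ) (p : ℕ → ℝ) (kbar : ℝ) (s : ℕ → ℕ → ℝ) (k i : ℕ) : ℝ :=
  (1/2) * ∑ k' ∈ K, (((k' : ℝ) + (k : ℝ)) / kbar) * p k' * (s k' i + s k' (i+1))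

/-- Workload increment `q_{k,i} = s_{k,i} - s_{k,i+1}`. -/
noncomputable def qq (s : ℕ → ℕ → ℝ) (k i : ℕ) : ℝ := s k i - s k (i+1)

/-- At the stationary point, larger-degree users have stochastically larger workloads:
`k > k'` implies `s_{k,i}* ≥ s_{k',i}*` for all `i`. -/
theorem degree_monotonicity (K : Finset ℕ) (p : ℕ → ℝ)
    (hp : ∀ k ∈ K, 0 ≤ p k) (hpsum : ∑ k ∈ K, p k = 1)
    (kbar : ℝ) (hkbar : kbar = ∑ k ∈ K, p k * (k : ℝ)) (hkpos : 0 < kbar)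
    (xcl mu : ℝ) (hx : 0 < xcl) (hmu : 0 < mu)
    (s : ℕ → ℕ → ℝ)
    (hs0 : ∀ k, s k 0 = 1) (hmono : ∀ k i, s k (i+1) ≤ s k i)
    (hnn : ∀ k i, 0 ≤ s k i)
    (hlim : ∀ k ∈ K, Filter.Tendsto (fun i => s k i) Filter.atTop (nhds 0))
    (hstat : ∀ k ∈ K, ∀ i : ℕ,
      xcl * (s k i - s k (i+1)) * zfun K p kbar s k i = mu * (s k (i+1) - s k (i+2))) :
    ∀ k ∈ K, ∀ k' ∈ K, k' < k → ∀ i : ℕ, s k' i ≤ s k i := by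
  have qnn : ∀ m i, 0 ≤ qq s m i := fun m i => sub_nonneg.mpr (hmono m i)
  -- z is nonnegative
  have znn : ∀ m i, 0 ≤ zfun K p kbar s m i := by
    intro m i
    unfold zfun
    apply mul_nonneg (by norm_num)
    apply Finset.sum_nonneg
    intro k1 hk1
    have hpk := hp k1 hk1
    have h1 := hnn k1 i
    have h2 := hnn k1 (i+1)
    have : (0:ℝ) ≤ ((k1:ℝ) + (m:ℝ)) / kbar := by positivity
    positivity
  -- partial telescoping sums
  have hpart : ∀ m i n : ℕ, ∑ j ∈ Finset.range n, qq s m (i+j) = s m i - s m (i+n) := by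
    intro m i n
    induction n with
    | zero => simp
    | succ t ih =>
      rw [Finset.sum_range_succ, ih]
      show s m i - s m (i+t) + (s m (i+t) - s m (i+t+1)) = s m i - s m (i+t+1)
      ring
  -- tail sums converge to s
  have hhs : ∀ m ∈ K, ∀ i, HasSum (fun j => qq s m (i+j)) (s m i) := by
    intro m hm i
    have hsum : Summable (fun j => qq s m (i+j)) := by
      apply summable_of_sum_range_le (c := s m i) (fun j => qnn m (i+j))
      intro n
      rw [hpart]
      linarith [hnn m (i+n)]
    rw [hsum.hasSum_iff_tendsto_nat]
    simp only [hpart]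
    have htend : Filter.Tendsto (fun n => s m (i+n)) Filter.atTop (nhds 0) := by
      have := (hlim m hm).comp (tendsto_add_atTop_nat i)
      simpa [Function.comp_def, add_comm] using this
    simpa using tendsto_const_nhds.sub htend
  intro k hk k' hk' hlt
  -- z monotone in degree
  have zmono : ∀ i, zfun K p kbar s k' i ≤ zfun K p kbar s k i := by
    intro i
    unfold zfun
    apply mul_le_mul_of_nonneg_left _ (by norm_num)
    apply Finset.sum_le_sum
    intro k1 hk1
    have hpk := hp k1 hk1
    have hss : (0:ℝ) ≤ s k1 i + s k1 (i+1) := by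
      have := hnn k1 i; have := hnn k1 (i+1); linarith
    have h1 : ((k1:ℝ) + (k':ℝ)) / kbar ≤ ((k1:ℝ) + (k:ℝ)) / kbar := by
      gcongr
    exact mul_le_mul_of_nonneg_right (mul_le_mul_of_nonneg_right h1 hpk) hss
  -- the stationary recursion in terms of qq
  have hrec : ∀ m ∈ K, ∀ i : ℕ,
      mu * qq s m (i+1) = xcl * qq s m i * zfun K p kbar s m i := by
    intro m hm i
    have := hstat m hm i
    unfold qq
    linarith [this]
  -- likelihood ratio ordering
  have mlr : ∀ l j : ℕ, qq s k' (l+j) * qq s k l ≤ qq s k (l+j) * qq s k' l := by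
    intro l j
    induction j with
    | zero => exact le_of_eq (mul_comm _ _)
    | succ n ih =>
      have h1 := hrec k hk (l+n)
      have h2 := hrec k' hk' (l+n)
      have hz := zmono (l+n)
      have hz' := znn k' (l+n)
      have hq1 := qnn k (l+n)
      have hq2 := qnn k' l
      have hq3 := qnn k l
      have key : mu * (qq s k' (l+n+1) * qq s k l) ≤ mu * (qq s k (l+n+1) * qq s k' l) := by
        calc mu * (qq s k' (l+n+1) * qq s k l)
            = (xcl * qq s k' (l+n) * zfun K p kbar s k' (l+n)) * qq s k l := by
              linear_combination qq s k l * h2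
          _ = xcl * zfun K p kbar s k' (l+n) * (qq s k' (l+n) * qq s k l) := by ring
          _ ≤ xcl * zfun K p kbar s k' (l+n) * (qq s k (l+n) * qq s k' l) := by
              apply mul_le_mul_of_nonneg_left ih
              positivity
          _ ≤ xcl * zfun K p kbar s k (l+n) * (qq s k (l+n) * qq s k' l) := by
              apply mul_le_mul_of_nonneg_right _ (mul_nonneg hq1 hq2)
              apply mul_le_mul_of_nonneg_left hz hx.le
          _ = mu * (qq s k (l+n+1) * qq s k' l) := by linear_combination (-(qq s k' l)) * h1
      exact le_of_mul_le_mul_left key hmu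
  intro i
  -- head sums
  have hH : ∀ m, ∑ l ∈ Finset.range i, qq s m l = 1 - s m i := by
    intro m
    have := hpart m 0 i
    simpa [hs0 m] using this
  set H := ∑ l ∈ Finset.range i, qq s k l with hHdef
  set H' := ∑ l ∈ Finset.range i, qq s k' l with hH'def
  -- main inequality H * s_{k',i} ≤ H' * s_{k,i}
  have key : H * s k' i ≤ H' * s k i := by
    have h1 : HasSum (fun j => H * qq s k' (i+j)) (H * s k' i) := (hhs k' hk' i).mul_left _
    have h2 : HasSum (fun j => H' * qq s k (i+j)) (H' * s k i) := (hhs k hk i).mul_left _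
    refine hasSum_le ?_ h1 h2
    intro j
    rw [hHdef, hH'def, Finset.sum_mul, Finset.sum_mul]
    apply Finset.sum_le_sum
    intro l hl
    have hl' : l ≤ i + j := le_trans (Finset.mem_range.mp hl).le (Nat.le_add_right i j)
    have := mlr l (i + j - l)
    rw [Nat.add_sub_cancel' hl'] at this
    calc qq s k l * qq s k' (i+j) = qq s k' (i+j) * qq s k l := mul_comm _ _
      _ ≤ qq s k (i+j) * qq s k' l := this
      _ = qq s k' l * qq s k (i+j) := mul_comm _ _
  have e1 : H + s k i = 1 := by rw [hHdef, hH k]; ring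
  have e2 : H' + s k' i = 1 := by rw [hH'def, hH k']; ring
  have e3 : H' - H = H' * s k i - H * s k' i := by linear_combination H * e2 - H' * e1
  linarith [key, e3, e1, e2]
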